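/- Let A be a finite nonempty alphabet, σ a bijection on A with σ^l = id_A for some integer l ≥ 1, and v = (v(n))_{n≥1} a sequence in A such that v(2n+1) = σ(v(n)) for all n ≥ 1. Then K₂(v) = {σ^j(v) : 0 ≤ j < l} ∪ ⋃_{j=0}^{l-1} σ^j(K₂(T₀v)), where (T₀v)(n) = v(2n) and σ^j acts pointwise on sequences. In particular, if T₀v has a finite 2-kernel, then v has a finite 2-kernel. -/

import Mathlib

/-- The operator taking a sequence `v = (v(n))_{n ≥ 1}` to the sequence `n ↦ v (2n)`. -/
def T0 {A : Type*} (v : ℕ+ → A) : ℕ+ → A := fun n => v (2 * n)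

/-- The 2-kernel of a sequence `v = (v(n))_{n ≥ 1}`:
the set of sequences `(v (2^i n + j))_{n ≥ 1}` with `0 ≤ j < 2^i`. -/
def kernel2 {A : Type*} (v : ℕ+ → A) : Set (ℕ+ → A) :=
  {w | ∃ i j : ℕ, j < 2 ^ i ∧
    w = fun n : ℕ+ => v ⟨2 ^ i * n.val + j,
      Nat.add_pos_left (Nat.mul_pos (pow_pos (by norm_num) i) n.pos) j⟩}

section Aux

variable {A : Type*} (σ : Equiv.Perm A) (v : ℕ+ → A)

/-- The sequence `n ↦ v (2^i n + j)`. -/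
def seqk (i j : ℕ) : ℕ+ → A :=
  fun n : ℕ+ => v ⟨2 ^ i * n.val + j,
    Nat.add_pos_left (Nat.mul_pos (pow_pos (by norm_num) i) n.pos) j⟩

lemma mem_kernel2_iff {w : ℕ+ → A} :
    w ∈ kernel2 v ↔ ∃ i j : ℕ, j < 2 ^ i ∧ w = seqk v i j := Iff.rfl

lemma vval {x y : ℕ} (hx : 0 < x) (hy : 0 < y) (h : x = y) :
    v ⟨x, hx⟩ = v ⟨y, hy⟩ := by subst h; rfl

lemma T0_apply (x : ℕ) (hx : 0 < x) :
    T0 v ⟨x, hx⟩ = v ⟨2 * x, by omega⟩ := by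
  show v (2 * (show ℕ+ from ⟨x, hx⟩)) = _
  exact congrArg v (PNat.coe_inj.mp (by simp [PNat.mul_coe, PNat.add_coe, PNat.one_coe, PNat.mk_coe]; rfl))

variable (hv : ∀ n : ℕ+, v (2 * n + 1) = σ (v n))

include hv in
lemma sigma_apply' (x : ℕ) (hx : 0 < x) :
    σ (v ⟨x, hx⟩) = v ⟨2 * x + 1, by omega⟩ := by
  rw [← hv (show ℕ+ from ⟨x, hx⟩)]
  exact (congrArg v (PNat.coe_inj.mp (by simp [PNat.mul_coe, PNat.add_coe, PNat.one_coe, PNat.mk_coe]; rfl))).symm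

include hv in
lemma sigma_pow_apply' (a x : ℕ) (hx : 0 < x) :
    (σ ^ a) (v ⟨x, hx⟩) = v ⟨2 ^ a * x + (2 ^ a - 1),
      Nat.add_pos_left (Nat.mul_pos (pow_pos (by norm_num) a) hx) _⟩ := by
  induction a with
  | zero =>
      simp only [pow_zero, Equiv.Perm.coe_one, id_eq]
      exact vval v _ _ (by omega)
  | succ a ih =>
      have h1 : (σ ^ (a + 1)) (v ⟨x, hx⟩) = σ ((σ ^ a) (v ⟨x, hx⟩)) := by
        rw [pow_succ']; rfl
      rw [h1, ih, sigma_apply' σ v hv]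
      apply vval
      have h2 : 0 < 2 ^ a := pow_pos (by norm_num) a
      rw [pow_succ]
      set k := 2 ^ a
      ring_nf
      omega

include hv in
lemma classify (i j : ℕ) (hij : j < 2 ^ i) :
    (∃ a : ℕ, seqk v i j = fun n => (σ ^ a) (v n)) ∨
    (∃ a i' j' : ℕ, j' < 2 ^ i' ∧
      seqk v i j = fun n => (σ ^ a) (seqk (T0 v) i' j' n)) := by
  induction i generalizing j with
  | zero =>
      interval_cases j
      left
      refine ⟨0, funext fun n => ?_⟩
      simp only [pow_zero, Equiv.Perm.coe_one, id_eq, seqk]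
      exact (vval v _ n.pos (by omega)).trans (congrArg v rfl)
  | succ i ih =>
      rcases Nat.even_or_odd j with ⟨j', hj'⟩ | ⟨j', hj'⟩
      · -- j = j' + j'
        right
        refine ⟨0, i, j', by omega, funext fun n => ?_⟩
        simp only [pow_zero, Equiv.Perm.coe_one, id_eq, seqk]
        rw [T0_apply]
        apply vval
        subst hj'
        rw [pow_succ]
        ring
      · -- j = 2 * j' + 1
        have hkey : seqk v (i + 1) j = fun n => σ (seqk v i j' n) := by
          funext n
          simp only [seqk]
          rw [sigma_apply' σ v hv]
          apply vval
          subst hj'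
          rw [pow_succ]
          ring
        rcases ih j' (by omega) with ⟨a, ha⟩ | ⟨a, i', j'', hj'', ha⟩
        · left
          refine ⟨a + 1, ?_⟩
          rw [hkey, ha]
          funext n
          rw [pow_succ']
          rfl
        · right
          refine ⟨a + 1, i', j'', hj'', ?_⟩
          rw [hkey, ha]
          funext n
          rw [pow_succ']
          rfl

end Aux

theorem stmt4 {A : Type*} [Finite A] [Nonempty A] (σ : Equiv.Perm A)
    (l : ℕ) (hl : 1 ≤ l) (hσ : σ ^ l = 1) (v : ℕ+ → A)
    (hv : ∀ n : ℕ+, v (2 * n + 1) = σ (v n)) :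
    kernel2 v =
      {w | ∃ j < l, w = fun n => (σ ^ j) (v n)} ∪
        (⋃ j < l, (fun w : ℕ+ → A => fun n => (σ ^ j) (w n)) '' kernel2 (T0 v)) ∧
    ((kernel2 (T0 v)).Finite → (kernel2 v).Finite) := by
  have hmod : ∀ a : ℕ, σ ^ a = σ ^ (a % l) := by
    intro a
    conv_lhs => rw [← Nat.div_add_mod a l]
    rw [pow_add, pow_mul, hσ, one_pow, one_mul]
  have heq : kernel2 v =
      {w | ∃ j < l, w = fun n => (σ ^ j) (v n)} ∪
        (⋃ j < l, (fun w : ℕ+ → A => fun n => (σ ^ j) (w n)) '' kernel2 (T0 v)) := by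
    ext w
    rw [mem_kernel2_iff]
    constructor
    · rintro ⟨i, j, hij, rfl⟩
      rcases classify σ v hv i j hij with ⟨a, ha⟩ | ⟨a, i', j', hj', ha⟩
      · left
        exact ⟨a % l, Nat.mod_lt a hl, by rw [ha, hmod a]⟩
      · right
        refine Set.mem_biUnion (Nat.mod_lt a hl : a % l < l) ?_
        refine ⟨seqk (T0 v) i' j', (mem_kernel2_iff (T0 v)).2 ⟨i', j', hj', rfl⟩, ?_⟩
        simp only
        rw [ha, hmod a]
    · rintro (⟨j, hjl, rfl⟩ | hw)
      · refine ⟨j, 2 ^ j - 1, by have := pow_pos (by norm_num : (0:ℕ) < 2) j; omega, ?_⟩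
        funext n
        exact (sigma_pow_apply' σ v hv j n.val n.pos).trans (vval v _ _ rfl)
      · simp only [Set.mem_iUnion] at hw
        obtain ⟨a, hal, u, hu, rfl⟩ := hw
        rw [mem_kernel2_iff] at hu
        obtain ⟨i', j', hj', rfl⟩ := hu
        have h2a : 0 < 2 ^ a := pow_pos (by norm_num) a
        have h2i : 0 < 2 ^ i' := pow_pos (by norm_num) i'
        refine ⟨a + i' + 1, 2 ^ (a + 1) * j' + (2 ^ a - 1), ?_, ?_⟩
        · have h1 : 2 ^ (a + 1) * j' + 2 ^ (a + 1) ≤ 2 ^ (a + i' + 1) := by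
            have h0 : 2 ^ (a + 1) * (j' + 1) ≤ 2 ^ (a + 1) * 2 ^ i' :=
              Nat.mul_le_mul_left _ hj'
            rw [mul_add, mul_one] at h0
            rwa [show 2 ^ (a + 1) * 2 ^ i' = 2 ^ (a + i' + 1) by
              rw [← pow_add]; ring_nf] at h0
          have h3 : 2 ^ (a + 1) = 2 * 2 ^ a := by rw [pow_succ]; ring
          omega
        · funext n
          simp only [seqk]
          rw [T0_apply, sigma_pow_apply' σ v hv]
          apply vval
          generalize (2 : ℕ) ^ a - 1 = t
          simp only [pow_succ, pow_add]
          ring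
  refine ⟨heq, fun hfin => ?_⟩
  rw [heq]
  apply Set.Finite.union
  · have hsub : {w : ℕ+ → A | ∃ j < l, w = fun n => (σ ^ j) (v n)} ⊆
        (fun j : ℕ => fun n => (σ ^ j) (v n)) '' Set.Iio l := by
      rintro w ⟨j, hjl, rfl⟩; exact ⟨j, hjl, rfl⟩
    exact Set.Finite.subset ((Set.finite_Iio l).image _) hsub
  · exact Set.Finite.biUnion (Set.finite_Iio l) fun j _ => hfin.image _
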